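/- arXiv:1308.4995 — 2 statements merged into one kernel-verified Lean document; each statement's English description precedes it below -/
import Mathlib

section
/- Let (z_j)_{j≥0} be a sequence of pairwise distinct complex numbers in the closed unit disc, let (e_j) be an orthonormal basis of an infinite-dimensional separable complex Hilbert space H, let T be the diagonal operator with T e_j = z_j e_j, and let 𝓡 = {p(T) : p a polynomial} be the unital algebra generated by T. If |z_{j₀}| = 1 for some j₀ ≥ 0, then the closure of the unit ball of 𝓡 in the weak operator topology contains a rank one operator (namely the orthogonal projection e_{j₀} ⊗ e_{j₀} onto the span of e_{j₀}). -/
open Filter Topology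

open scoped InnerProductSpace

open Complex in
private lemma strict_tri (a b : ℂ) (ha : ‖a‖ ≤ 1) (hb : ‖b‖ = 1) (hab : a ≠ b) :
    ‖a + b‖ < 2 := by
  by_contra h
  push_neg at h
  apply hab
  have hna : normSq a ≤ 1 := by
    have := Complex.sq_norm a
    nlinarith [norm_nonneg a, norm_nonneg b, norm_nonneg (a+b)]
  have hnb : normSq b = 1 := by
    have := Complex.sq_norm b
    nlinarith [norm_nonneg a, norm_nonneg b, norm_nonneg (a+b)]
  have hnab : (4:ℝ) ≤ normSq (a + b) := by
    have := Complex.sq_norm (a + b)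
    nlinarith [norm_nonneg a, norm_nonneg b, norm_nonneg (a+b)]
  have hexp := Complex.normSq_add a b
  set c := a * (starRingEnd ℂ) b with hc
  have hre : 1 ≤ c.re := by linarith
  have hnc : normSq c ≤ 1 := by
    rw [hc, map_mul, Complex.normSq_conj]
    nlinarith [Complex.normSq_nonneg a]
  have hsq : c.re * c.re + c.im * c.im = normSq c := (Complex.normSq_apply c).symm
  have him : c.im = 0 := by nlinarith
  have hre1 : c.re = 1 := by nlinarith
  have hc1 : c = 1 := by
    apply Complex.ext <;> simp [him, hre1]
  have hbb : (starRingEnd ℂ) b * b = 1 := by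
    rw [mul_comm, Complex.mul_conj, hnb]; simp
  calc a = a * ((starRingEnd ℂ) b * b) := by rw [hbb, mul_one]
    _ = c * b := by rw [hc]; ring
    _ = b := by rw [hc1, one_mul]

private lemma parseval {H : Type*} [NormedAddCommGroup H] [InnerProductSpace ℂ H]
    (e : HilbertBasis ℕ ℂ H) (y : H) :
    HasSum (fun i => ‖⟪e i, y⟫_ℂ‖ ^ 2) (‖y‖ ^ 2) := by
  have h := Complex.hasSum_re (e.hasSum_inner_mul_inner y y)
  convert h using 1
  · funext i
    rw [← inner_conj_symm y (e i), ← Complex.normSq_eq_conj_mul_self,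
      Complex.ofReal_re, ← Complex.sq_norm]
  · rw [inner_self_eq_norm_sq_to_K]
    norm_cast

private lemma diag_inner {H : Type*} [NormedAddCommGroup H] [InnerProductSpace ℂ H]
    (e : HilbertBasis ℕ ℂ H) (A : H →L[ℂ] H) (a : ℕ → ℂ)
    (hA : ∀ j, A (e j) = a j • e j) (x : H) (j : ℕ) :
    ⟪e j, A x⟫_ℂ = a j * ⟪e j, x⟫_ℂ := by
  have h1 : HasSum (fun i => e.repr x i • (a i • e i)) (A x) := by
    have := (e.hasSum_repr x).mapL A
    simpa [hA] using this
  have h2 : HasSum (fun i => ⟪e j, e.repr x i • (a i • e i)⟫_ℂ) ⟪e j, A x⟫_ℂ :=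
    h1.mapL (innerSL ℂ (e j))
  have h3 : ∀ i, ⟪e j, e.repr x i • (a i • e i)⟫_ℂ
      = if i = j then a j * ⟪e j, x⟫_ℂ else 0 := by
    intro i
    rw [inner_smul_right, inner_smul_right, orthonormal_iff_ite.mp e.orthonormal j i]
    by_cases h : i = j
    · subst h; simp [e.repr_apply_apply]; ring
    · simp [h, Ne.symm h]
  rw [funext h3] at h2
  exact h2.unique (hasSum_ite_eq j _)

private lemma diag_norm_le {H : Type*} [NormedAddCommGroup H] [InnerProductSpace ℂ H]
    (e : HilbertBasis ℕ ℂ H) (A : H →L[ℂ] H) (a : ℕ → ℂ)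
    (hA : ∀ j, A (e j) = a j • e j) (ha : ∀ j, ‖a j‖ ≤ 1) : ‖A‖ ≤ 1 := by
  refine A.opNorm_le_bound zero_le_one fun x => ?_
  rw [one_mul]
  have hAx := parseval e (A x)
  have hx := parseval e x
  have hle : ‖A x‖ ^ 2 ≤ ‖x‖ ^ 2 := by
    refine hasSum_le (fun j => ?_) hAx hx
    rw [diag_inner e A a hA x j, norm_mul, mul_pow]
    have h2 : ‖a j‖ ^ 2 ≤ 1 := by nlinarith [ha j, norm_nonneg (a j)]
    nlinarith [sq_nonneg ‖⟪e j, x⟫_ℂ‖]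
  nlinarith [norm_nonneg (A x), norm_nonneg x]

private lemma aeval_diag {H : Type*} [NormedAddCommGroup H] [InnerProductSpace ℂ H]
    (e : HilbertBasis ℕ ℂ H) (z : ℕ → ℂ) (T : H →L[ℂ] H)
    (hT : ∀ j, T (e j) = z j • e j) (p : Polynomial ℂ) (j : ℕ) :
    (Polynomial.aeval T p) (e j) = Polynomial.eval (z j) p • e j := by
  have hpow : ∀ n : ℕ, (T ^ n) (e j) = (z j ^ n) • e j := by
    intro n
    induction n with
    | zero => simp
    | succ n ih =>
      rw [pow_succ, ContinuousLinearMap.mul_apply, hT, map_smul, ih,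
        smul_smul, pow_succ, mul_comm]
  induction p using Polynomial.induction_on' with
  | add p q hp hq =>
    simp [hp, hq, add_smul]
  | monomial n c =>
    rw [Polynomial.aeval_monomial, Polynomial.eval_monomial]
    simp [ContinuousLinearMap.mul_apply, hpow, smul_smul,
      Algebra.algebraMap_eq_smul_one]

/-- The closure of a set of operators in the weak operator topology. -/
def wotClosure (E : Type*) [NormedAddCommGroup E] [NormedSpace ℂ E]
    (S : Set (E →L[ℂ] E)) : Set (E →L[ℂ] E) :=
  {T | ContinuousLinearMapWOT.ofCLM T ∈ closure (ContinuousLinearMapWOT.ofCLM '' S)}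

set_option maxHeartbeats 1000000 in
/-- If `T = diag(z_j)` is a diagonal operator with distinct diagonal entries in the closed
unit disc and `|z_{j₀}| = 1` for some `j₀`, then the WOT-closure of the unit ball of the
unital algebra `𝓡 = {p(T)}` contains the rank one projection `e_{j₀} ⊗ e_{j₀}`. -/
theorem rank_one_mem_wotClosure_ball_of_unimodular_diagonal_entry
    {H : Type*} [NormedAddCommGroup H] [InnerProductSpace ℂ H] [CompleteSpace H]
    (e : HilbertBasis ℕ ℂ H) (z : ℕ → ℂ) (hzd : Function.Injective z)
    (hz : ∀ j, ‖z j‖ ≤ 1)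
    (T : H →L[ℂ] H) (hT : ∀ j, T (e j) = z j • e j)
    (j₀ : ℕ) (hj₀ : ‖z j₀‖ = 1) :
    (innerSL ℂ (e j₀)).smulRight (e j₀) ∈
        wotClosure H {X : H →L[ℂ] H |
          (∃ p : Polynomial ℂ, X = Polynomial.aeval T p) ∧ ‖X‖ ≤ 1} ∧
      Module.finrank ℂ (LinearMap.range (((innerSL ℂ (e j₀)).smulRight (e j₀) : H →L[ℂ] H) : H →ₗ[ℂ] H)) = 1 := by
  set P : H →L[ℂ] H := (innerSL ℂ (e j₀)).smulRight (e j₀) with hP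
  have hPx : ∀ x, P x = ⟪e j₀, x⟫_ℂ • e j₀ := fun x => rfl
  have hej₀ : (e j₀ : H) ≠ 0 := e.orthonormal.ne_zero j₀
  have hnej₀ : ‖(e j₀ : H)‖ = 1 := e.orthonormal.1 j₀
  constructor
  · -- closure membership
    have hz0 : z j₀ ≠ 0 := by
      intro h; rw [h] at hj₀; simp at hj₀
    set w : ℕ → ℂ := fun j => (z j + z j₀) / (2 * z j₀) with hw
    have hwle : ∀ j, ‖w j‖ ≤ 1 := by
      intro j
      rw [hw]
      simp only [norm_div, norm_mul]
      rw [Complex.norm_ofNat, hj₀, mul_one, div_le_one (by norm_num)]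
      calc ‖z j + z j₀‖ ≤ ‖z j‖ + ‖z j₀‖ := norm_add_le _ _
        _ ≤ 2 := by rw [hj₀]; linarith [hz j]
    have hwj₀ : w j₀ = 1 := by
      rw [hw]; field_simp; ring
    have hwlt : ∀ j, j ≠ j₀ → ‖w j‖ < 1 := by
      intro j hj
      rw [hw]
      simp only [norm_div, norm_mul]
      rw [Complex.norm_ofNat, hj₀, mul_one, div_lt_one (by norm_num)]
      exact strict_tri (z j) (z j₀) (hz j) hj₀ (fun h => hj (hzd h))
    set q : Polynomial ℂ := Polynomial.C ((2 * z j₀)⁻¹) * (Polynomial.X + Polynomial.C (z j₀))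
      with hq
    have hqe : ∀ j, Polynomial.eval (z j) q = w j := by
      intro j
      rw [hq, hw]
      simp [div_eq_mul_inv, mul_comm]
    set A : ℕ → (H →L[ℂ] H) := fun n => Polynomial.aeval T (q ^ n) with hA
    have hAn : ∀ n j, A n (e j) = (w j ^ n) • e j := by
      intro n j
      rw [hA]
      simp only
      rw [aeval_diag e z T hT, Polynomial.eval_pow, hqe]
    have hAnorm : ∀ n, ‖A n‖ ≤ 1 := by
      intro n
      refine diag_norm_le e (A n) (fun j => w j ^ n) (hAn n) fun j => ?_
      rw [norm_pow]
      exact pow_le_one₀ (norm_nonneg _) (hwle j)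
    have hmem : ∀ n, ContinuousLinearMapWOT.ofCLM (A n) ∈
        ContinuousLinearMapWOT.ofCLM '' {X : H →L[ℂ] H |
          (∃ p : Polynomial ℂ, X = Polynomial.aeval T p) ∧ ‖X‖ ≤ 1} :=
      fun n => ⟨A n, ⟨⟨q ^ n, rfl⟩, hAnorm n⟩, rfl⟩
    have htend : Tendsto (fun n => ContinuousLinearMapWOT.ofCLM (A n)) atTop
        (𝓝 (ContinuousLinearMapWOT.ofCLM P)) := by
      rw [ContinuousLinearMapWOT.tendsto_iff_forall_inner_apply_tendsto]
      intro x y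
      simp only [ContinuousLinearMap.toWOT_apply]
      have hsum_x := (parseval e x).summable
      have hsum_y := (parseval e y).summable
      have hkey : ∀ n, ⟪y, A n x⟫_ℂ = ∑' j, ⟪y, e j⟫_ℂ * (w j ^ n * ⟪e j, x⟫_ℂ) := by
        intro n
        rw [← e.tsum_inner_mul_inner y (A n x)]
        congr 1
        funext j
        rw [diag_inner e (A n) (fun j => w j ^ n) (hAn n) x j]
      have hlim : ⟪y, P x⟫_ℂ = ∑' j, (if j = j₀ then ⟪y, e j₀⟫_ℂ * ⟪e j₀, x⟫_ℂ else 0) := by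
        rw [tsum_ite_eq, hPx, inner_smul_right, mul_comm]
      simp only [hkey, hlim]
      apply tendsto_tsum_of_dominated_convergence
        (bound := fun j => ‖⟪y, e j⟫_ℂ‖ * ‖⟪e j, x⟫_ℂ‖)
      · -- summable bound
        refine Summable.of_nonneg_of_le (fun j => by positivity) (fun j => ?_)
          (hsum_y.add hsum_x)
        rw [← norm_inner_symm y (e j)]
        nlinarith [sq_nonneg (‖⟪e j, y⟫_ℂ‖ - ‖⟪e j, x⟫_ℂ‖), norm_nonneg (⟪e j, y⟫_ℂ),
          norm_nonneg (⟪e j, x⟫_ℂ)]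
      · -- pointwise convergence
        intro j
        by_cases hj : j = j₀
        · subst hj
          have hc : Tendsto (fun _ : ℕ => ⟪y, e j⟫_ℂ * ⟪e j, x⟫_ℂ) atTop
              (𝓝 (⟪y, e j⟫_ℂ * ⟪e j, x⟫_ℂ)) := tendsto_const_nhds
          simpa [hwj₀] using hc
        · simp only [if_neg hj]
          have : Tendsto (fun n => w j ^ n) atTop (𝓝 0) :=
            tendsto_pow_atTop_nhds_zero_of_norm_lt_one (hwlt j hj)
          have h2 := ((this.mul_const (⟪e j, x⟫_ℂ)).const_mul (⟪y, e j⟫_ℂ))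
          simpa using h2
      · -- bound
        filter_upwards with n j
        rw [norm_mul, norm_mul, norm_pow]
        have h1 : ‖w j‖ ^ n ≤ 1 := pow_le_one₀ (norm_nonneg _) (hwle j)
        have h2 : ‖w j‖ ^ n * ‖⟪e j, x⟫_ℂ‖ ≤ 1 * ‖⟪e j, x⟫_ℂ‖ :=
          mul_le_mul_of_nonneg_right h1 (norm_nonneg _)
        rw [one_mul] at h2
        exact mul_le_mul_of_nonneg_left h2 (norm_nonneg _)
    exact mem_closure_of_tendsto htend (Eventually.of_forall hmem)
  · -- finrank
    have hrange : LinearMap.range ((P : H →L[ℂ] H) : H →ₗ[ℂ] H) = Submodule.span ℂ {(e j₀ : H)} := by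
      apply le_antisymm
      · rintro v ⟨x, rfl⟩
        show ⟪e j₀, x⟫_ℂ • (e j₀ : H) ∈ Submodule.span ℂ {(e j₀ : H)}
        exact Submodule.smul_mem _ _ (Submodule.mem_span_singleton_self _)
      · rw [Submodule.span_le, Set.singleton_subset_iff]
        refine ⟨e j₀, ?_⟩
        show ⟪e j₀, e j₀⟫_ℂ • (e j₀ : H) = e j₀
        rw [inner_self_eq_norm_sq_to_K, hnej₀]
        norm_num
    rw [hrange]
    exact finrank_span_singleton hej₀
end

section
/- Let (z_j)_{j≥0} be a sequence of pairwise distinct complex numbers with |z_j| < 1 for all j and such that the closure of {z_j : j ≥ 0} contains the unit circle ∂𝔻, let (e_j) be an orthonormal basis of an infinite-dimensional separable complex Hilbert space H, let T be the diagonal operator with T e_j = z_j e_j, and let 𝓡 = {p(T) : p a polynomial}. Then the closure of the unit ball of 𝓡 in the weak operator topology equals the set of all diagonal operators diag(f(z_j)) where f ∈ H∞(𝔻) and ‖f‖_∞ ≤ 1. -/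
open Filter Topology

set_option linter.unusedSectionVars false
set_option linter.unusedVariables false
set_option maxHeartbeats 1000000

open Metric Polynomial
open scoped ENNReal NNReal ComplexConjugate

local notation "⟪" x ", " y "⟫" => @inner ℂ _ _ x y

section AuxHilbert
variable {H : Type*} [NormedAddCommGroup H] [InnerProductSpace ℂ H] [CompleteSpace H]
  (e : HilbertBasis ℕ ℂ H)

lemma pow_diag (z : ℕ → ℂ) (T : H →L[ℂ] H) (hT : ∀ j, T (e j) = z j • e j) (n : ℕ) (j : ℕ) :
    (T ^ n) (e j) = (z j) ^ n • e j := by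
  induction n with
  | zero => simp
  | succ n ih =>
    rw [pow_succ, ContinuousLinearMap.mul_apply, hT, map_smul, ih, smul_smul, pow_succ, mul_comm]


lemma aeval_diag_s15 (z : ℕ → ℂ) (T : H →L[ℂ] H) (hT : ∀ j, T (e j) = z j • e j)
    (p : ℂ[X]) (j : ℕ) : (aeval T p) (e j) = p.eval (z j) • e j := by
  induction p using Polynomial.induction_on' with
  | add p q hp hq => rw [map_add, ContinuousLinearMap.add_apply, hp, hq, eval_add, add_smul]
  | monomial n a =>
    rw [aeval_monomial, ContinuousLinearMap.mul_apply, pow_diag e z T hT, map_smul,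
      Polynomial.eval_monomial]
    simp [Algebra.algebraMap_eq_smul_one, smul_smul, mul_comm]


lemma inner_diag {X : H →L[ℂ] H} {d : ℕ → ℂ} (h : ∀ j, X (e j) = d j • e j) (x : H) (i : ℕ) :
    ⟪e i, X x⟫ = d i * ⟪e i, x⟫ := by
  have hs : HasSum (fun j => e.repr x j • X (e j)) (X x) := by
    simpa using (e.hasSum_repr x).mapL X
  have hs2 : HasSum (fun j => (innerSL ℂ (e i)) (e.repr x j • X (e j))) ⟪e i, X x⟫ :=
    hs.mapL (innerSL ℂ (e i))
  have key : ∀ j, (innerSL ℂ (e i)) (e.repr x j • X (e j))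
      = if j = i then d i * ⟪e i, x⟫ else 0 := by
    intro j
    rw [h j]
    simp only [innerSL_apply_apply, inner_smul_right]
    rw [orthonormal_iff_ite.mp e.orthonormal]
    by_cases hij : j = i
    · subst hij; simp [e.repr_apply_apply, mul_comm]
    · simp only [if_neg hij, mul_ite, mul_zero, ite_eq_right_iff]
      exact fun hji => absurd hji.symm hij
  have hs3 : HasSum (fun j : ℕ => if j = i then d i * ⟪e i, x⟫ else 0) ⟪e i, X x⟫ := by
    simpa only [key] using hs2
  have := (hasSum_ite_eq i (d i * ⟪e i, x⟫)).unique hs3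
  exact this.symm


lemma eq_of_inner_basis {u v : H} (h : ∀ i, ⟪e i, u⟫ = ⟪e i, v⟫) : u = v := by
  apply e.repr.injective
  apply Subtype.ext
  funext i
  have : e.repr u i = e.repr v i := by rw [e.repr_apply_apply, e.repr_apply_apply, h i]
  exact this


lemma norm_le_one_of_diag {X : H →L[ℂ] H} {d : ℕ → ℂ} (h : ∀ j, X (e j) = d j • e j)
    (hd : ∀ j, ‖d j‖ ≤ 1) : ‖X‖ ≤ 1 := by
  refine ContinuousLinearMap.opNorm_le_bound X zero_le_one (fun x => ?_)
  rw [one_mul]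
  have h1 : ‖X x‖ = ‖e.repr (X x)‖ := (e.repr.norm_map (X x)).symm
  have h2 : ‖x‖ = ‖e.repr x‖ := (e.repr.norm_map x).symm
  rw [h1, h2]
  have hp : (0:ℝ) < (2 : ℝ≥0∞).toReal := by norm_num
  rw [lp.norm_eq_tsum_rpow hp, lp.norm_eq_tsum_rpow hp]
  apply Real.rpow_le_rpow (tsum_nonneg fun i => by positivity) ?_ (by positivity)
  apply Summable.tsum_le_tsum ?_ ((lp.memℓp _).summable hp) ((lp.memℓp _).summable hp)
  intro i
  have hXi : e.repr (X x) i = d i * e.repr x i := by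
    rw [e.repr_apply_apply, e.repr_apply_apply, inner_diag e h]
  rw [hXi]
  apply Real.rpow_le_rpow (norm_nonneg _) ?_ (by norm_num)
  rw [norm_mul]
  exact mul_le_of_le_one_left (norm_nonneg _) (hd i)


lemma summable_sq (v : H) : Summable (fun i => ‖⟪e i, v⟫‖ ^ 2) := by
  have hp : (0:ℝ) < (2 : ℝ≥0∞).toReal := by norm_num
  have := (lp.memℓp (e.repr v)).summable hp
  have h2 : (fun i => ‖e.repr v i‖ ^ (2 : ℝ≥0∞).toReal) = fun i => ‖⟪e i, v⟫‖ ^ 2 := by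
    funext i
    rw [e.repr_apply_apply]
    have : ((2 : ℝ≥0∞).toReal) = ((2:ℕ) : ℝ) := by norm_num
    rw [this, Real.rpow_natCast]
  rwa [h2] at this


lemma summable_prod (v x : H) : Summable (fun i => ‖⟪v, e i⟫‖ * ‖⟪e i, x⟫‖) := by
  have hv := summable_sq e v
  have hx := summable_sq e x
  refine Summable.of_nonneg_of_le (fun i => by positivity) (fun i => ?_)
    ((hv.add hx).div_const 2)
  have hns : ‖⟪v, e i⟫‖ = ‖⟪e i, v⟫‖ := by
    rw [← inner_conj_symm (e i) v, RCLike.norm_conj]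
  rw [hns]
  nlinarith [sq_nonneg (‖⟪e i, v⟫‖ - ‖⟪e i, x⟫‖), norm_nonneg (⟪e i, v⟫), norm_nonneg (⟪e i, x⟫)]


lemma wot_tendsto {B : ℕ → (H →L[ℂ] H)} {X : H →L[ℂ] H} {d : ℕ → ℕ → ℂ} {c : ℕ → ℂ}
    (hB : ∀ m j, B m (e j) = d m j • e j) (hX : ∀ j, X (e j) = c j • e j)
    (hd1 : ∀ m j, ‖d m j‖ ≤ 1)
    (hconv : ∀ j, Tendsto (fun m => d m j) atTop (𝓝 (c j))) :
    Tendsto (fun m => ContinuousLinearMapWOT.ofCLM (B m)) atTop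
      (𝓝 (ContinuousLinearMapWOT.ofCLM X)) := by
  rw [ContinuousLinearMapWOT.tendsto_iff_forall_dual_apply_tendsto]
  intro x y
  set v : H := (InnerProductSpace.toDual ℂ H).symm y with hv
  have hy : ∀ u : H, y u = ⟪v, u⟫ := fun u => (InnerProductSpace.toDual_symm_apply).symm
  have hexp : ∀ (A : H →L[ℂ] H) (dd : ℕ → ℂ), (∀ j, A (e j) = dd j • e j) →
      ⟪v, A x⟫ = ∑' i, ⟪v, e i⟫ * (dd i * ⟪e i, x⟫) := by
    intro A dd hA
    have h1 := e.hasSum_inner_mul_inner v (A x)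
    have h2 : (fun i => ⟪v, e i⟫ * ⟪e i, A x⟫) = fun i => ⟪v, e i⟫ * (dd i * ⟪e i, x⟫) := by
      funext i; rw [inner_diag e hA]
    rw [h2] at h1
    exact h1.tsum_eq.symm
  have hrw : ∀ m, y ((ContinuousLinearMapWOT.ofCLM (B m)) x)
      = ∑' i, ⟪v, e i⟫ * (d m i * ⟪e i, x⟫) := by
    intro m
    rw [ContinuousLinearMap.toWOT_apply, hy, hexp (B m) (d m) (hB m)]
  have hrwX : y ((ContinuousLinearMapWOT.ofCLM X) x) = ∑' i, ⟪v, e i⟫ * (c i * ⟪e i, x⟫) := by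
    rw [ContinuousLinearMap.toWOT_apply, hy, hexp X c hX]
  simp only [hrw, hrwX]
  apply tendsto_tsum_of_dominated_convergence (bound := fun i => ‖⟪v, e i⟫‖ * ‖⟪e i, x⟫‖)
  · exact summable_prod e v x
  · intro i
    exact tendsto_const_nhds.mul ((hconv i).mul_const _)
  · apply Eventually.of_forall
    intro m i
    rw [norm_mul, norm_mul]
    apply mul_le_mul_of_nonneg_left ?_ (norm_nonneg _)
    exact mul_le_of_le_one_left (norm_nonneg _) (hd1 m i)

end AuxHilbert

lemma hasSum_eval (p : ℂ[X]) (w : ℂ) :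
    HasSum (fun k => p.coeff k * w ^ k) (p.eval w) := by
  rw [Polynomial.eval_eq_sum_range]
  apply hasSum_sum_of_ne_finset_zero
  intro k hk
  rw [Finset.mem_range, not_lt] at hk
  rw [Polynomial.coeff_eq_zero_of_natDegree_lt (by omega), zero_mul]


lemma coeff_norm_le (p : ℂ[X]) (hp : ∀ w : ℂ, ‖w‖ ≤ 1 → ‖p.eval w‖ ≤ 1) (k : ℕ) :
    ‖p.coeff k‖ ≤ 1 := by
  set f : ℂ → ℂ := fun w => p.eval w with hf
  have hd : DifferentiableOn ℂ f (closedBall (0:ℂ) ((1:ℝ≥0) : ℝ)) :=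
    (Polynomial.differentiable p).differentiableOn
  have hps : HasFPowerSeriesOnBall f (cauchyPowerSeries f 0 1) 0 1 :=
    hd.hasFPowerSeriesOnBall one_pos
  -- identify the coefficient
  have hderiv : ∀ n : ℕ, iteratedDeriv n f = fun x => (derivative^[n] p).eval x := by
    intro n
    induction n with
    | zero => simp [iteratedDeriv_zero, hf]
    | succ n ih =>
      rw [iteratedDeriv_succ, ih]
      funext x
      rw [Function.iterate_succ_apply', Polynomial.deriv]
  have hcoeff : (cauchyPowerSeries f 0 1) k (fun _ => (1:ℂ)) = p.coeff k := by
    have h1 : ((Nat.factorial k) : ℂ) • (cauchyPowerSeries f 0 1) k (fun _ => (1:ℂ))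
        = iteratedFDeriv ℂ k f 0 (fun _ => (1:ℂ)) := by
      have := hps.factorial_smul (1:ℂ) k
      rw [← this, Nat.cast_smul_eq_nsmul]
    have h2 : iteratedFDeriv ℂ k f 0 (fun _ => (1:ℂ)) = iteratedDeriv k f 0 := by
      rw [iteratedDeriv_eq_iteratedFDeriv]
    have h3 : iteratedDeriv k f 0 = ((Nat.factorial k) : ℂ) * p.coeff k := by
      rw [hderiv k]
      show eval 0 ((⇑derivative)^[k] p) = _
      rw [← Polynomial.coeff_zero_eq_eval_zero]
      rw [Polynomial.coeff_iterate_derivative]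
      rw [zero_add, Nat.descFactorial_self, nsmul_eq_mul]
    have h4 : ((Nat.factorial k) : ℂ) • (cauchyPowerSeries f 0 1) k (fun _ => (1:ℂ))
        = ((Nat.factorial k) : ℂ) * p.coeff k := by rw [h1, h2, h3]
    rw [smul_eq_mul] at h4
    exact mul_left_cancel₀ (Nat.cast_ne_zero.mpr (Nat.factorial_ne_zero k)) h4
  have hb1 : ‖p.coeff k‖ ≤ ‖(cauchyPowerSeries f 0 1) k‖ := by
    rw [← hcoeff]
    calc ‖(cauchyPowerSeries f 0 1) k (fun _ => (1:ℂ))‖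
        ≤ ‖(cauchyPowerSeries f 0 1) k‖ * ∏ _i : Fin k, ‖(1:ℂ)‖ :=
          ContinuousMultilinearMap.le_opNorm _ _
      _ = ‖(cauchyPowerSeries f 0 1) k‖ := by simp
  have hint : (∫ θ : ℝ in (0)..2 * Real.pi, ‖f (circleMap 0 1 θ)‖) ≤ 2 * Real.pi := by
    have : (∫ θ : ℝ in (0)..2 * Real.pi, ‖f (circleMap 0 1 θ)‖)
        ≤ ∫ _θ : ℝ in (0)..2 * Real.pi, (1:ℝ) := by
      apply intervalIntegral.integral_mono_on Real.two_pi_pos.le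
      · exact ((Polynomial.continuous p).comp (continuous_circleMap 0 1)).norm.intervalIntegrable _ _
      · exact intervalIntegrable_const
      · intro θ _
        apply hp
        have := norm_circleMap_zero 1 θ
        rw [this]; norm_num
    simpa using this
  have hb2 : ‖(cauchyPowerSeries f 0 1) k‖ ≤ 1 := by
    have := norm_cauchyPowerSeries_le f 0 1 k
    have h5 : ((2 * Real.pi)⁻¹ * ∫ θ : ℝ in (0)..2 * Real.pi, ‖f (circleMap 0 1 θ)‖)
        * |(1:ℝ)|⁻¹ ^ k ≤ 1 := by
      rw [abs_one, inv_one, one_pow, mul_one]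
      rw [inv_mul_le_iff₀ Real.two_pi_pos, mul_one]
      exact hint
    exact this.trans h5
  exact hb1.trans hb2


lemma maxmod (z : ℕ → ℂ) (hsphere : sphere (0:ℂ) 1 ⊆ closure (Set.range z)) (p : ℂ[X])
    (hb : ∀ j, ‖p.eval (z j)‖ ≤ 1) : ∀ w : ℂ, ‖w‖ ≤ 1 → ‖p.eval w‖ ≤ 1 := by
  have hcl : ∀ w ∈ closure (Set.range z), ‖p.eval w‖ ≤ 1 := by
    intro w hw
    have hS : IsClosed {w : ℂ | ‖p.eval w‖ ≤ 1} :=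
      isClosed_le (Polynomial.continuous p).norm continuous_const
    have hsub : Set.range z ⊆ {w : ℂ | ‖p.eval w‖ ≤ 1} := by
      rintro _ ⟨j, rfl⟩; exact hb j
    exact closure_minimal hsub hS hw
  intro w hw
  have hwball : w ∈ closure (ball (0:ℂ) 1) := by
    rw [closure_ball (0:ℂ) one_ne_zero, mem_closedBall, dist_zero_right]; exact hw
  refine Complex.norm_le_of_forall_mem_frontier_norm_le isBounded_ball
    (Polynomial.differentiable p).diffContOnCl ?_ hwball
  intro ζ hζ
  rw [frontier_ball (0:ℂ) one_ne_zero] at hζ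
  exact hcl ζ (hsphere hζ)


lemma tendsto_eval (P : ℕ → ℂ[X]) (hc : ∀ n k, ‖(P n).coeff k‖ ≤ 1) (a : ℕ → ℂ)
    {l : Filter ℕ} (ha : ∀ k, Tendsto (fun n => (P n).coeff k) l (𝓝 (a k)))
    (w : ℂ) (hw : ‖w‖ < 1) :
    Tendsto (fun n => (P n).eval w) l (𝓝 (∑' k, a k * w ^ k)) := by
  have key : Tendsto (fun n => ∑' k, (P n).coeff k * w ^ k) l (𝓝 (∑' k, a k * w ^ k)) := by
    apply tendsto_tsum_of_dominated_convergence (bound := fun k => ‖w‖ ^ k)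
    · exact summable_geometric_of_lt_one (norm_nonneg w) hw
    · exact fun k => (ha k).mul_const _
    · apply Eventually.of_forall
      intro n k
      rw [norm_mul, norm_pow]
      exact mul_le_of_le_one_left (by positivity) (hc n k)
  have : (fun n => (P n).eval w) = fun n => ∑' k, (P n).coeff k * w ^ k := by
    funext n; exact (hasSum_eval (P n) w).tsum_eq.symm
  rw [this]
  exact key


lemma diff_tsum (a : ℕ → ℂ) (ha : ∀ k, ‖a k‖ ≤ 1) :
    DifferentiableOn ℂ (fun w => ∑' k, a k * w ^ k) (ball (0:ℂ) 1) := by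
  set q : FormalMultilinearSeries ℂ ℂ ℂ := FormalMultilinearSeries.ofScalars ℂ a with hq
  have hrad : (1 : ℝ≥0∞) ≤ q.radius := by
    apply FormalMultilinearSeries.le_radius_of_bound _ 1 (r := 1)
    intro n
    simp only [hq, FormalMultilinearSeries.ofScalars_norm]
    rw [NNReal.coe_one, one_pow, mul_one]
    exact ha n
  have hps : HasFPowerSeriesOnBall q.sum q 0 q.radius :=
    q.hasFPowerSeriesOnBall (lt_of_lt_of_le one_pos hrad)
  have hdiff : DifferentiableOn ℂ q.sum (Metric.eball (0:ℂ) q.radius) := hps.differentiableOn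
  have hsub : ball (0:ℂ) 1 ⊆ Metric.eball (0:ℂ) q.radius := by
    intro w hw
    rw [Metric.mem_eball, edist_zero_right]
    calc (‖w‖₊ : ℝ≥0∞) < 1 := by
          rw [← ENNReal.coe_one, ENNReal.coe_lt_coe, ← NNReal.coe_lt_coe]
          simpa using hw
      _ ≤ q.radius := hrad
  apply (hdiff.mono hsub).congr
  intro w _
  rw [hq]
  have h0 := FormalMultilinearSeries.ofScalars_sum_eq (E := ℂ) a w
  rw [FormalMultilinearSeries.ofScalarsSum] at h0
  rw [h0]
  simp [smul_eq_mul]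


lemma approx_poly {f : ℂ → ℂ} (hf : DifferentiableOn ℂ f (ball (0:ℂ) 1))
    (hfb : ∀ w ∈ ball (0:ℂ) 1, ‖f w‖ ≤ 1) {r : ℝ} (hr0 : 0 < r) (hr1 : r < 1)
    {ε : ℝ} (hε : 0 < ε) :
    ∃ p : ℂ[X], (∀ w : ℂ, ‖w‖ ≤ 1 → ‖p.eval w‖ ≤ 1) ∧
      (∀ w : ℂ, ‖w‖ ≤ 1 → ‖p.eval w - f ((r:ℂ)^2 * w)‖ ≤ 2*ε) := by
  set g : ℂ → ℂ := fun w => f ((r:ℂ)^2 * w) with hg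
  set R : ℝ≥0 := ⟨1/r, by positivity⟩ with hR
  have hRr : (R : ℝ) = 1/r := rfl
  have hmaps : ∀ w : ℂ, ‖w‖ ≤ (R:ℝ) → ((r:ℂ)^2 * w) ∈ ball (0:ℂ) 1 := by
    intro w hw
    rw [mem_ball_zero_iff, norm_mul, norm_pow, Complex.norm_real, Real.norm_of_nonneg hr0.le]
    calc r^2 * ‖w‖ ≤ r^2 * (1/r) := by
          apply mul_le_mul_of_nonneg_left (by rwa [hRr] at hw) (by positivity)
      _ = r := by field_simp [pow_two]
      _ < 1 := hr1
  have hgd : DifferentiableOn ℂ g (closedBall (0:ℂ) ((R:ℝ≥0) : ℝ)) := by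
    apply DifferentiableOn.comp (t := ball (0:ℂ) 1) hf
    · exact (differentiable_id.const_mul _).differentiableOn
    · intro w hw
      rw [mem_closedBall, dist_zero_right] at hw
      exact hmaps w hw
  have hRpos : 0 < R := by rw [← NNReal.coe_lt_coe, hRr]; positivity
  have hps : HasFPowerSeriesOnBall g (cauchyPowerSeries g 0 R) 0 R :=
    hgd.hasFPowerSeriesOnBall hRpos
  have hR1 : ((1:ℝ≥0) : ℝ≥0∞) < (R : ℝ≥0∞) := by
    rw [ENNReal.coe_lt_coe, ← NNReal.coe_lt_coe, hRr, NNReal.coe_one]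
    rw [lt_div_iff₀ hr0, one_mul]
    exact hr1
  set r' : ℝ≥0 := ⟨(1 + 1/r)/2, by positivity⟩ with hr'
  have hr'R : (r' : ℝ≥0∞) < (R : ℝ≥0∞) := by
    rw [ENNReal.coe_lt_coe, ← NNReal.coe_lt_coe]
    show (1 + 1/r)/2 < 1/r
    have : 1 < 1/r := by rw [lt_div_iff₀ hr0, one_mul]; exact hr1
    linarith
  have hr'1 : (1:ℝ) < (r' : ℝ) := by
    show (1:ℝ) < (1 + 1/r)/2
    have : 1 < 1/r := by rw [lt_div_iff₀ hr0, one_mul]; exact hr1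
    linarith
  have huni := hps.tendstoUniformlyOn hr'R
  rw [Metric.tendstoUniformlyOn_iff] at huni
  obtain ⟨N, hN⟩ := (huni ε hε).exists
  set q := cauchyPowerSeries g 0 R with hq
  set P : ℂ[X] := ∑ k ∈ Finset.range N, Polynomial.C (q.coeff k) * Polynomial.X ^ k with hP
  have hPeval : ∀ y : ℂ, P.eval y = ∑ k ∈ Finset.range N, (q k fun _ => y) := by
    intro y
    rw [hP, Polynomial.eval_finset_sum]
    apply Finset.sum_congr rfl
    intro k _
    rw [Polynomial.eval_mul, Polynomial.eval_C, Polynomial.eval_pow, Polynomial.eval_X,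
      FormalMultilinearSeries.apply_eq_pow_smul_coeff, smul_eq_mul, mul_comm]
  have hclose : ∀ y : ℂ, ‖y‖ ≤ 1 → ‖P.eval y - g y‖ < ε := by
    intro y hy
    have hymem : y ∈ ball (0:ℂ) (r' : ℝ) := by
      rw [mem_ball, dist_zero_right]; exact lt_of_le_of_lt hy hr'1
    have hdist := hN y hymem
    rw [dist_comm, dist_eq_norm] at hdist
    rw [hPeval]
    simpa [FormalMultilinearSeries.partialSum] using hdist
  have hgb : ∀ y : ℂ, ‖y‖ ≤ 1 → ‖g y‖ ≤ 1 := by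
    intro y hy
    apply hfb
    apply hmaps
    calc ‖y‖ ≤ 1 := hy
      _ ≤ (R:ℝ) := by rw [hRr]; rw [le_div_iff₀ hr0, one_mul]; exact hr1.le
  have hPb : ∀ y : ℂ, ‖y‖ ≤ 1 → ‖P.eval y‖ ≤ 1 + ε := by
    intro y hy
    calc ‖P.eval y‖ ≤ ‖g y‖ + ‖P.eval y - g y‖ := norm_le_insert' _ _
      _ ≤ 1 + ε := add_le_add (hgb y hy) (hclose y hy).le
  set α : ℂ := (Complex.ofReal ((1+ε)⁻¹)) with hα
  refine ⟨Polynomial.C α * P, ?_, ?_⟩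
  · intro w hw
    rw [Polynomial.eval_mul, Polynomial.eval_C, norm_mul]
    have hαn : ‖α‖ = (1+ε)⁻¹ := by
      rw [hα, Complex.norm_real]
      exact Real.norm_of_nonneg (by positivity)
    rw [hαn]
    calc (1+ε)⁻¹ * ‖P.eval w‖ ≤ (1+ε)⁻¹ * (1+ε) := by
          apply mul_le_mul_of_nonneg_left (hPb w hw) (by positivity)
      _ = 1 := by field_simp
  · intro w hw
    have h1 : ‖(Polynomial.C α * P).eval w - P.eval w‖ ≤ ε := by
      rw [Polynomial.eval_mul, Polynomial.eval_C, ← sub_one_mul, norm_mul]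
      have : ‖α - 1‖ = 1 - (1+ε)⁻¹ := by
        have h8 : α - 1 = Complex.ofReal ((1+ε)⁻¹ - 1) := by rw [hα]; push_cast; ring
        rw [h8, Complex.norm_real]
        rw [Real.norm_of_nonpos (by
          rw [sub_nonpos]; apply inv_le_one_of_one_le₀; linarith)]
        ring
      rw [this]
      calc (1 - (1+ε)⁻¹) * ‖P.eval w‖ ≤ (1 - (1+ε)⁻¹) * (1+ε) := by
            apply mul_le_mul_of_nonneg_left (hPb w hw) ?_
            rw [sub_nonneg]
            apply inv_le_one_of_one_le₀; linarith
        _ = ε := by field_simp; ring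
    calc ‖(Polynomial.C α * P).eval w - f ((r:ℂ)^2 * w)‖
        ≤ ‖(Polynomial.C α * P).eval w - P.eval w‖ + ‖P.eval w - g w‖ := by
          have : (Polynomial.C α * P).eval w - f ((r:ℂ)^2 * w)
              = ((Polynomial.C α * P).eval w - P.eval w) + (P.eval w - g w) := by
            rw [hg]; ring
          rw [this]; exact norm_add_le _ _
      _ ≤ ε + ε := add_le_add h1 (hclose w hw).le
      _ = 2*ε := by ring


/-- If `T = diag(z_j)` is a diagonal operator with distinct diagonal entries in the open
unit disc accumulating at every point of the unit circle, then the WOT-closure of the unit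
ball of the unital algebra `𝓡 = {p(T)}` equals the set of all diagonal operators
`diag(f(z_j))` with `f ∈ H^∞(𝔻)` and `‖f‖_∞ ≤ 1`. -/
theorem wotClosure_ball_eq_Hinfty_diagonal
    {H : Type*} [NormedAddCommGroup H] [InnerProductSpace ℂ H] [CompleteSpace H]
    (e : HilbertBasis ℕ ℂ H) (z : ℕ → ℂ) (hzd : Function.Injective z)
    (hz : ∀ j, ‖z j‖ < 1)
    (hsphere : Metric.sphere (0 : ℂ) 1 ⊆ closure (Set.range z))
    (T : H →L[ℂ] H) (hT : ∀ j, T (e j) = z j • e j) :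
    wotClosure H {X : H →L[ℂ] H |
        (∃ p : Polynomial ℂ, X = Polynomial.aeval T p) ∧ ‖X‖ ≤ 1} =
      {X : H →L[ℂ] H | ∃ f : ℂ → ℂ, DifferentiableOn ℂ f (Metric.ball 0 1) ∧
        (∀ w ∈ Metric.ball (0 : ℂ) 1, ‖f w‖ ≤ 1) ∧
        ∀ j, X (e j) = f (z j) • e j} := by
  set S : Set (H →L[ℂ] H) := {X : H →L[ℂ] H |
      (∃ p : Polynomial ℂ, X = Polynomial.aeval T p) ∧ ‖X‖ ≤ 1} with hS
  apply Set.eq_of_subset_of_subset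
  · -- forward inclusion
    intro X hX
    have hX' : ContinuousLinearMapWOT.ofCLM X
        ∈ closure (ContinuousLinearMapWOT.ofCLM '' S) := hX
    -- step 1: select approximating polynomials
    have hsel : ∀ n : ℕ, ∃ p : ℂ[X], ‖(aeval T p : H →L[ℂ] H)‖ ≤ 1 ∧
        ∀ i < n, ∀ k < n,
          ‖⟪e k, (aeval T p : H →L[ℂ] H) (e i)⟫ - ⟪e k, X (e i)⟫‖ < 1/(n+1) := by
      intro n
      set O : Set (H →WOT[ℂ] H) := ⋂ q ∈ Finset.range n ×ˢ Finset.range n,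
        {A : H →WOT[ℂ] H | ‖(innerSL ℂ (e q.2)) (A (e q.1))
          - (innerSL ℂ (e q.2)) ((ContinuousLinearMapWOT.ofCLM X) (e q.1))‖ < 1/(n+1)}
        with hO
      have hOopen : IsOpen O := by
        apply isOpen_biInter_finset
        intro q _
        have hcont : Continuous fun A : H →WOT[ℂ] H => (innerSL ℂ (e q.2)) (A (e q.1)) :=
          ContinuousLinearMapWOT.continuous_dual_apply (e q.1) (innerSL ℂ (e q.2))
        exact isOpen_lt ((hcont.sub continuous_const).norm) continuous_const
      have hOX : ContinuousLinearMapWOT.ofCLM X ∈ O := by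
        rw [hO]
        apply Set.mem_iInter₂.mpr
        intro q _
        simp only [Set.mem_setOf_eq, sub_self, norm_zero]
        positivity
      obtain ⟨A, hAO, hAim⟩ := _root_.mem_closure_iff.mp hX' O hOopen hOX
      obtain ⟨B, hBS, rfl⟩ := hAim
      obtain ⟨⟨p, rfl⟩, hBn⟩ := hBS
      refine ⟨p, hBn, ?_⟩
      intro i hi k hk
      have hq := Set.mem_iInter₂.mp hAO (i, k)
        (by simp [Finset.mem_product, Finset.mem_range, hi, hk])
      simpa [ContinuousLinearMap.toWOT_apply, innerSL_apply_apply] using hq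
    choose p hpn hpent using hsel
    -- step 2: diagonal entries are bounded
    have henorm1 : ∀ j, ‖e j‖ = 1 := fun j => e.orthonormal.1 j
    have hev : ∀ n j, ‖(p n).eval (z j)‖ ≤ 1 := by
      intro n j
      have h1 : (aeval T (p n) : H →L[ℂ] H) (e j) = (p n).eval (z j) • e j :=
        aeval_diag_s15 e z T hT (p n) j
      have h2 : ‖(aeval T (p n) : H →L[ℂ] H) (e j)‖ ≤ ‖(aeval T (p n) : H →L[ℂ] H)‖ * ‖e j‖ :=
        ContinuousLinearMap.le_opNorm _ _
      rw [h1, norm_smul, henorm1 j, mul_one] at h2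
      simp only [mul_one] at h2
      exact h2.trans (hpn n)
    have hsup : ∀ n, ∀ w : ℂ, ‖w‖ ≤ 1 → ‖(p n).eval w‖ ≤ 1 :=
      fun n => maxmod z hsphere (p n) (hev n)
    have hcoe : ∀ n k, ‖(p n).coeff k‖ ≤ 1 := fun n k => coeff_norm_le (p n) (hsup n) k
    -- step 3: diagonal limits
    set c : ℕ → ℂ := fun j => ⟪e j, X (e j)⟫ with hc
    have hinv : Tendsto (fun n : ℕ => 1/((n:ℝ)+1)) atTop (𝓝 0) :=
      tendsto_one_div_add_atTop_nhds_zero_nat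
    have hdiagonalentry : ∀ n i k, ⟪e k, (aeval T (p n) : H →L[ℂ] H) (e i)⟫
        = (p n).eval (z i) * (if k = i then 1 else 0) := by
      intro n i k
      rw [aeval_diag_s15 e z T hT, inner_smul_right, orthonormal_iff_ite.mp e.orthonormal]
    have hcj : ∀ j, Tendsto (fun n => (p n).eval (z j)) atTop (𝓝 (c j)) := by
      intro j
      rw [tendsto_iff_norm_sub_tendsto_zero]
      apply squeeze_zero_norm' ?_ hinv
      filter_upwards [eventually_ge_atTop (j+1)] with n hn
      have := hpent n j (by omega) j (by omega)
      rw [hdiagonalentry n j j, if_pos rfl, mul_one] at this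
      rw [Real.norm_of_nonneg (norm_nonneg _)]
      exact this.le
    have hoff : ∀ i k, k ≠ i → ⟪e k, X (e i)⟫ = 0 := by
      intro i k hki
      have h0 : Tendsto (fun _ : ℕ => (0:ℂ)) atTop (𝓝 ⟪e k, X (e i)⟫) := by
        rw [tendsto_iff_norm_sub_tendsto_zero]
        apply squeeze_zero_norm' ?_ hinv
        filter_upwards [eventually_ge_atTop (max i k + 1)] with n hn
        have := hpent n i (by omega) k (by omega)
        rw [hdiagonalentry n i k, if_neg hki, mul_zero] at this
        rw [Real.norm_of_nonneg (norm_nonneg _)]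
        simpa using this.le
      exact tendsto_nhds_unique h0 tendsto_const_nhds
    have hXdiag : ∀ j, X (e j) = c j • e j := by
      intro j
      apply eq_of_inner_basis e
      intro i
      rw [inner_smul_right, orthonormal_iff_ite.mp e.orthonormal]
      by_cases hij : i = j
      · subst hij; simp [hc]
      · rw [if_neg hij, mul_zero]
        exact hoff j i hij
    -- step 4: ultrafilter limit of coefficients
    set U : Ultrafilter ℕ := Ultrafilter.of atTop with hU
    have hUle : (U : Filter ℕ) ≤ atTop := Ultrafilter.of_le atTop
    have ha : ∀ k, ∃ x ∈ closedBall (0:ℂ) 1,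
        (Ultrafilter.map (fun n => (p n).coeff k) U : Filter ℂ) ≤ 𝓝 x := by
      intro k
      apply (isCompact_closedBall (0:ℂ) 1).ultrafilter_le_nhds
      rw [Ultrafilter.coe_map, le_principal_iff, mem_map]
      apply Filter.univ_mem'
      intro n
      rw [Set.mem_preimage, mem_closedBall_zero_iff]
      exact hcoe n k
    choose a hamem htend' using ha
    have htend : ∀ k, Tendsto (fun n => (p n).coeff k) (U : Filter ℕ) (𝓝 (a k)) := by
      intro k
      have := htend' k
      rwa [Ultrafilter.coe_map] at this
    have hak : ∀ k, ‖a k‖ ≤ 1 := fun k => mem_closedBall_zero_iff.mp (hamem k)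
    set f : ℂ → ℂ := fun w => ∑' k, a k * w ^ k with hf
    have hfw : ∀ w ∈ ball (0:ℂ) 1, ‖f w‖ ≤ 1 := by
      intro w hw
      rw [mem_ball_zero_iff] at hw
      have htw := tendsto_eval p hcoe a htend w hw
      exact le_of_tendsto htw.norm (Eventually.of_forall (fun n => hsup n w hw.le))
    have hfz : ∀ j, f (z j) = c j := by
      intro j
      exact tendsto_nhds_unique (tendsto_eval p hcoe a htend (z j) (hz j))
        ((hcj j).mono_left hUle)
    exact ⟨f, diff_tsum a hak, hfw, fun j => by rw [hXdiag j, hfz j]⟩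
  · -- backward inclusion
    rintro X ⟨f, hfd, hfb, hXdiag⟩
    set r : ℕ → ℝ := fun m => ((m:ℝ)+1)/((m:ℝ)+2) with hr
    have hr0 : ∀ m, 0 < r m := by intro m; rw [hr]; positivity
    have hr1 : ∀ m, r m < 1 := by
      intro m; rw [hr, div_lt_one (by positivity)]; linarith
    have h2 : Tendsto (fun m : ℕ => 1/((m:ℝ)+2)) atTop (𝓝 0) := by
      have h2' := (tendsto_one_div_add_atTop_nhds_zero_nat (𝕜 := ℝ)).comp (tendsto_add_atTop_nat 1)
      exact Tendsto.congr (fun m => by simp only [Function.comp_apply]; push_cast; ring) h2'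
    have hrlim : Tendsto r atTop (𝓝 1) := by
      have heq : r = fun m : ℕ => 1 - 1/((m:ℝ)+2) := by
        funext m; rw [hr]; field_simp; ring
      rw [heq]
      simpa using (tendsto_const_nhds (x := (1:ℝ))).sub h2
    have hap : ∀ m : ℕ, ∃ q : ℂ[X], (∀ w : ℂ, ‖w‖ ≤ 1 → ‖q.eval w‖ ≤ 1) ∧
        (∀ w : ℂ, ‖w‖ ≤ 1 → ‖q.eval w - f (((r m):ℂ)^2 * w)‖ ≤ 2*(1/((m:ℝ)+1))) :=
      fun m => approx_poly hfd hfb (hr0 m) (hr1 m) (ε := 1/((m:ℝ)+1)) (by positivity)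
    choose q hq1 hq2 using hap
    set d : ℕ → ℕ → ℂ := fun m j => (q m).eval (z j) with hd
    set B : ℕ → (H →L[ℂ] H) := fun m => aeval T (q m) with hB
    have hBdiag : ∀ m j, B m (e j) = d m j • e j := fun m j => aeval_diag_s15 e z T hT (q m) j
    have hd1 : ∀ m j, ‖d m j‖ ≤ 1 := fun m j => hq1 m (z j) (hz j).le
    have hBS : ∀ m, B m ∈ S := fun m => ⟨⟨q m, rfl⟩, norm_le_one_of_diag e (hBdiag m) (hd1 m)⟩
    have hconv : ∀ j, Tendsto (fun m => d m j) atTop (𝓝 (f (z j))) := by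
      intro j
      have hzj : z j ∈ ball (0:ℂ) 1 := mem_ball_zero_iff.mpr (hz j)
      have hcont : ContinuousAt f (z j) :=
        (hfd.differentiableAt (isOpen_ball.mem_nhds hzj)).continuousAt
      have hA : Tendsto (fun m => (((r m):ℝ) : ℂ)^2 * z j) atTop (𝓝 (z j)) := by
        have h1 : Tendsto (fun m => ((r m : ℝ) : ℂ)) atTop (𝓝 ((1:ℝ):ℂ)) :=
          (Complex.continuous_ofReal.tendsto 1).comp hrlim
        have h3 := (h1.pow 2).mul_const (z j)
        simpa using h3
      have hBt : Tendsto (fun m => f ((((r m):ℝ):ℂ)^2 * z j)) atTop (𝓝 (f (z j))) :=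
        hcont.tendsto.comp hA
      have hC : Tendsto (fun m => d m j - f ((((r m):ℝ):ℂ)^2 * z j)) atTop (𝓝 0) := by
        apply squeeze_zero_norm (fun m => hq2 m (z j) (hz j).le)
        have := tendsto_one_div_add_atTop_nhds_zero_nat.const_mul (2:ℝ)
        simpa using this
      have h4 := hC.add hBt
      rw [zero_add] at h4
      apply h4.congr
      intro m
      ring
    have hwot := wot_tendsto e hBdiag hXdiag hd1 hconv
    show ContinuousLinearMapWOT.ofCLM X ∈ closure (ContinuousLinearMapWOT.ofCLM '' S)
    exact mem_closure_of_tendsto hwot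
      (Eventually.of_forall (fun m => Set.mem_image_of_mem _ (hBS m)))
end
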